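/- If γ, γ' ∈ Γ(1/8) = { ∑ a_k 8^k : a_k ∈ {0,2} } are distinct, then γ − γ' belongs to the zero set Z_{3/8} = { (2ℓ+1)·8^k / (4·3^k) : ℓ ∈ ℤ, k ≥ 1 } of μ̂_{3/8}. In particular, the exponentials {e_γ : γ ∈ Γ(1/8)} are orthogonal in L²(μ_{3/8}). -/
import Mathlib


open MeasureTheory Real ENNReal

/-- The set `Γ(1/8)` of finite sums `∑ aₖ 8^k` with digits `aₖ ∈ {0,2}`. -/
def Gamma8 : Set ℝ :=
  {x | ∃ (N : ℕ) (a : ℕ → ℝ), (∀ k, a k = 0 ∨ a k = 2) ∧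
    x = ∑ k ∈ Finset.range N, a k * 8 ^ k}

/-- The zero set `Z_{3/8} = { (2ℓ+1) 8^k / (4 · 3^k) : ℓ ∈ ℤ, k ≥ 1 }`. -/
def Z38 : Set ℝ :=
  {t | ∃ (k : ℕ) (l : ℤ) , 1 ≤ k ∧ t = (2 * l + 1) * 8 ^ k / (4 * 3 ^ k)}

lemma key8 (M : ℕ) : ∀ (d : ℕ → ℤ), (∀ k, d k = -1 ∨ d k = 0 ∨ d k = 1) →
    ∑ k ∈ Finset.range M, d k * 8 ^ k ≠ 0 →
    ∃ (k₀ : ℕ) (c : ℤ), Odd c ∧ ∑ k ∈ Finset.range M, d k * 8 ^ k = 8 ^ k₀ * c := by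
  induction M with
  | zero => intro d hd hne; simp at hne
  | succ M ih =>
    intro d hd hne
    have hs : ∑ k ∈ Finset.range (M + 1), d k * 8 ^ k
        = 8 * (∑ k ∈ Finset.range M, d (k + 1) * 8 ^ k) + d 0 := by
      rw [Finset.sum_range_succ', Finset.mul_sum]
      simp only [pow_zero, mul_one]
      congr 1
      refine Finset.sum_congr rfl fun k _ => by ring
    rcases hd 0 with h0 | h0 | h0
    · refine ⟨0, ∑ k ∈ Finset.range (M + 1), d k * 8 ^ k,
        ⟨4 * (∑ k ∈ Finset.range M, d (k + 1) * 8 ^ k) - 1, by rw [hs, h0]; ring⟩, by ring⟩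
    · have hT : ∑ k ∈ Finset.range M, d (k + 1) * 8 ^ k ≠ 0 := by
        intro hT0; apply hne; rw [hs, hT0, h0]; ring
      obtain ⟨k₀, c, hc, hTc⟩ := ih (fun k => d (k + 1)) (fun k => hd (k + 1)) hT
      exact ⟨k₀ + 1, c, hc, by rw [hs, hTc, h0]; ring⟩
    · refine ⟨0, ∑ k ∈ Finset.range (M + 1), d k * 8 ^ k,
        ⟨4 * (∑ k ∈ Finset.range M, d (k + 1) * 8 ^ k), by rw [hs, h0]; ring⟩, by ring⟩

theorem stmt15 (μ : Measure ℝ) [IsProbabilityMeasure μ]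
    (hzero : ∀ t ∈ Z38, (∫ x, Complex.exp (2 * π * Complex.I * t * x) ∂μ) = 0)
    (γ γ' : ℝ) (h : γ ∈ Gamma8) (h' : γ' ∈ Gamma8) (hne : γ ≠ γ') :
    γ - γ' ∈ Z38 ∧
      (∫ x, Complex.exp (2 * π * Complex.I * γ * x) *
        (starRingEnd ℂ) (Complex.exp (2 * π * Complex.I * γ' * x)) ∂μ) = 0 := by
  classical
  obtain ⟨N, a, ha, hγ⟩ := h
  obtain ⟨N', b, hb, hγ'⟩ := h'
  set M := max N N' with hM
  set D : (ℕ → ℝ) → ℕ → ℕ → ℤ := fun f n k => if k < n ∧ f k = 2 then 1 else 0 with hD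
  have hsum : ∀ (f : ℕ → ℝ) (n : ℕ), (∀ k, f k = 0 ∨ f k = 2) → n ≤ M →
      ∑ k ∈ Finset.range n, f k * 8 ^ k
        = ∑ k ∈ Finset.range M, (2 * ((D f n k : ℤ) : ℝ)) * 8 ^ k := by
    intro f n hf hn
    rw [← Finset.sum_subset (Finset.range_subset_range.2 hn)
      (fun x _ hx => by
        simp only [Finset.mem_range, not_lt] at hx
        simp [hD, Nat.not_lt.2 hx])]
    refine Finset.sum_congr rfl fun k hk => ?_
    simp only [Finset.mem_range] at hk
    rcases hf k with h2 | h2 <;> simp [hD, hk, h2]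
  have hγM := hsum a N ha (le_max_left _ _)
  have hγ'M := hsum b N' hb (le_max_right _ _)
  set d : ℕ → ℤ := fun k => D a N k - D b N' k with hd
  have hdval : ∀ k, d k = -1 ∨ d k = 0 ∨ d k = 1 := by
    intro k
    simp only [hd, hD]
    split <;> split <;> simp
  have hdiff : γ - γ' = 2 * ((∑ k ∈ Finset.range M, d k * 8 ^ k : ℤ) : ℝ) := by
    rw [hγ, hγ', hγM, hγ'M, ← Finset.sum_sub_distrib]
    simp only [hd]
    push_cast
    rw [Finset.mul_sum]
    refine Finset.sum_congr rfl fun k _ => by ring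
  have hT : ∑ k ∈ Finset.range M, d k * 8 ^ k ≠ 0 := by
    intro h0
    apply hne
    have : γ - γ' = 0 := by rw [hdiff, h0]; simp
    linarith
  obtain ⟨k₀, c, hc, hTc⟩ := key8 M d hdval hT
  have hodd : Odd ((3 : ℤ) ^ (k₀ + 1) * c) := (Odd.pow ⟨1, by norm_num⟩).mul hc
  obtain ⟨l, hl⟩ := hodd
  have hmem : γ - γ' ∈ Z38 := by
    refine ⟨k₀ + 1, l, le_refl 1 |>.trans (Nat.le_add_left 1 k₀), ?_⟩
    rw [hdiff, hTc]
    push_cast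
    rw [show (2 : ℝ) * (l : ℝ) + 1 = 3 ^ (k₀ + 1) * (c : ℝ) from by exact_mod_cast hl.symm]
    have h3ne : (3 : ℝ) ^ (k₀ + 1) ≠ 0 := by positivity
    field_simp
    ring
  refine ⟨hmem, ?_⟩
  rw [← hzero _ hmem]
  congr 1
  funext x
  rw [← Complex.exp_conj, ← Complex.exp_add]
  congr 1
  simp only [map_mul, Complex.conj_I, Complex.conj_ofReal, map_ofNat]
  push_cast
  ring
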